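/- Let B₁, B₂, B₃ be dichotomic observables on ℂ^d and ρ a state on ℂ^d. Define 𝔅₁ = B₁+B₂−B₃, 𝔅₂ = B₁−B₂+B₃, 𝔅₃ = −B₁+B₂+B₃. Then √(Re Tr[𝔅₁² ρ]) + √(Re Tr[𝔅₂² ρ]) + √(Re Tr[𝔅₃² ρ]) ≤ √(3·(12 − Re Tr[(B₁+B₂+B₃)² ρ])) ≤ 6, so the degree of incompatibility D_T = Σ_y √(Re Tr[𝔅_y² ρ]) − 4 is at most 2; moreover, if B₁+B₂+B₃ = 0 then each √(Re Tr[𝔅_y² ρ]) = 2 and the sum equals 6 (i.e. D_T attains its maximal value 2). -/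

import Mathlib

open ComplexOrder

lemma trace_re_nonneg_of_posSemidef {d : ℕ} (M : Matrix (Fin d) (Fin d) ℂ)
    (hM : M.PosSemidef) : 0 ≤ M.trace.re := by
  rw [Matrix.trace, Complex.re_sum]
  apply Finset.sum_nonneg
  intro i _
  have := hM.re_dotProduct_nonneg (Pi.single i 1)
  simpa [Matrix.mulVec_single, dotProduct, Pi.single_apply, Matrix.diag] using this

open Matrix in
lemma sq_trace_re_nonneg {d : ℕ} (A ρ : Matrix (Fin d) (Fin d) ℂ)
    (hA : A.IsHermitian) (hρ : ρ.PosSemidef) : 0 ≤ ((A * A * ρ).trace).re := by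
  have h1 : (A * A * ρ).trace = (A * ρ * Aᴴ).trace := by
    rw [hA.eq, Matrix.trace_mul_cycle A ρ A]
  rw [h1]
  exact trace_re_nonneg_of_posSemidef _ (hρ.mul_mul_conjTranspose_same A)

lemma sqrt3_sum_le {a b c : ℝ} (ha : 0 ≤ a) (hb : 0 ≤ b) (hc : 0 ≤ c) :
    Real.sqrt a + Real.sqrt b + Real.sqrt c ≤ Real.sqrt (3 * (a + b + c)) := by
  have key : (Real.sqrt a + Real.sqrt b + Real.sqrt c)^2 ≤ 3 * (a + b + c) := by
    nlinarith [sq_nonneg (Real.sqrt a - Real.sqrt b), sq_nonneg (Real.sqrt a - Real.sqrt c),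
      sq_nonneg (Real.sqrt b - Real.sqrt c), Real.sq_sqrt ha, Real.sq_sqrt hb, Real.sq_sqrt hc,
      Real.sqrt_nonneg a, Real.sqrt_nonneg b, Real.sqrt_nonneg c]
  calc Real.sqrt a + Real.sqrt b + Real.sqrt c
      = Real.sqrt ((Real.sqrt a + Real.sqrt b + Real.sqrt c)^2) :=
        (Real.sqrt_sq (by positivity)).symm
    _ ≤ Real.sqrt (3 * (a + b + c)) := Real.sqrt_le_sqrt key

lemma norm_neg_double {d : ℕ} (A ρ : Matrix (Fin d) (Fin d) ℂ)
    (hA2 : A * A = 1) (hρtr : ρ.trace = 1) :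
    Real.sqrt ((((-(A + A)) * (-(A + A)) * ρ).trace).re) = 2 := by
  have e : (-(A + A)) * (-(A + A)) = A*A + A*A + A*A + A*A := by noncomm_ring
  rw [e, hA2]
  have h4 : (((1:Matrix (Fin d) (Fin d) ℂ) + 1 + 1 + 1) * ρ).trace = 4 := by
    simp only [Matrix.add_mul, Matrix.one_mul, Matrix.trace_add, hρtr]
    norm_num
  rw [h4]
  norm_num

/-- The degree of incompatibility of three dichotomic observables (trine
version): with `𝔅₁ = B₁+B₂−B₃`, `𝔅₂ = B₁−B₂+B₃`, `𝔅₃ = −B₁+B₂+B₃` and the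
state-dependent norms `‖𝔅_y‖_ρ = √(Re Tr[𝔅_y² ρ])`, the sum of the norms is at
most `√(3(12 − Re Tr[(B₁+B₂+B₃)² ρ])) ≤ 6`, so `D_T = Σ‖𝔅_y‖_ρ − 4 ≤ 2`;
moreover if `B₁+B₂+B₃ = 0` each norm equals 2 and the sum equals 6. -/
theorem trine_incompatibility_bound {d : ℕ}
    (B₁ B₂ B₃ : Matrix (Fin d) (Fin d) ℂ)
    (hB₁ : B₁.IsHermitian) (hB₂ : B₂.IsHermitian) (hB₃ : B₃.IsHermitian)
    (hB₁sq : B₁ * B₁ = 1) (hB₂sq : B₂ * B₂ = 1) (hB₃sq : B₃ * B₃ = 1)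
    (ρ : Matrix (Fin d) (Fin d) ℂ) (hρ : ρ.PosSemidef) (hρtr : ρ.trace = 1) :
    let 𝔅₁ := B₁ + B₂ - B₃
    let 𝔅₂ := B₁ - B₂ + B₃
    let 𝔅₃ := -B₁ + B₂ + B₃
    let n : Matrix (Fin d) (Fin d) ℂ → ℝ := fun O => Real.sqrt (((O * O * ρ).trace).re)
    (n 𝔅₁ + n 𝔅₂ + n 𝔅₃
        ≤ Real.sqrt (3 * (12 - (((B₁ + B₂ + B₃) * (B₁ + B₂ + B₃) * ρ).trace).re))) ∧
    (Real.sqrt (3 * (12 - (((B₁ + B₂ + B₃) * (B₁ + B₂ + B₃) * ρ).trace).re)) ≤ 6) ∧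
    (n 𝔅₁ + n 𝔅₂ + n 𝔅₃ - 4 ≤ 2) ∧
    (B₁ + B₂ + B₃ = 0 →
      (n 𝔅₁ = 2 ∧ n 𝔅₂ = 2 ∧ n 𝔅₃ = 2) ∧ n 𝔅₁ + n 𝔅₂ + n 𝔅₃ = 6) := by
  intro 𝔅₁ 𝔅₂ 𝔅₃ n
  set S := B₁ + B₂ + B₃ with hS
  -- Hermitian facts
  have h𝔅₁ : 𝔅₁.IsHermitian := (hB₁.add hB₂).sub hB₃
  have h𝔅₂ : 𝔅₂.IsHermitian := (hB₁.sub hB₂).add hB₃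
  have h𝔅₃ : 𝔅₃.IsHermitian := (hB₁.neg.add hB₂).add hB₃
  have hSh : S.IsHermitian := (hB₁.add hB₂).add hB₃
  -- abbreviations for the real parts
  set a := ((𝔅₁ * 𝔅₁ * ρ).trace).re with haDef
  set b := ((𝔅₂ * 𝔅₂ * ρ).trace).re with hbDef
  set c := ((𝔅₃ * 𝔅₃ * ρ).trace).re with hcDef
  set s := ((S * S * ρ).trace).re with hsDef
  have hna : n 𝔅₁ = Real.sqrt a := rfl
  have hnb : n 𝔅₂ = Real.sqrt b := rfl
  have hnc : n 𝔅₃ = Real.sqrt c := rfl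
  have ha : 0 ≤ a := sq_trace_re_nonneg _ _ h𝔅₁ hρ
  have hb : 0 ≤ b := sq_trace_re_nonneg _ _ h𝔅₂ hρ
  have hc : 0 ≤ c := sq_trace_re_nonneg _ _ h𝔅₃ hρ
  have hs : 0 ≤ s := sq_trace_re_nonneg _ _ hSh hρ
  -- the key algebraic identity
  have hid : 𝔅₁ * 𝔅₁ + 𝔅₂ * 𝔅₂ + 𝔅₃ * 𝔅₃ + S * S
      = (B₁*B₁ + B₁*B₁ + B₁*B₁ + B₁*B₁) + (B₂*B₂ + B₂*B₂ + B₂*B₂ + B₂*B₂)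
        + (B₃*B₃ + B₃*B₃ + B₃*B₃ + B₃*B₃) := by
    show (B₁ + B₂ - B₃) * (B₁ + B₂ - B₃) + (B₁ - B₂ + B₃) * (B₁ - B₂ + B₃)
        + (-B₁ + B₂ + B₃) * (-B₁ + B₂ + B₃) + (B₁ + B₂ + B₃) * (B₁ + B₂ + B₃) = _
    noncomm_ring
  have htr : (𝔅₁ * 𝔅₁ * ρ).trace + (𝔅₂ * 𝔅₂ * ρ).trace + (𝔅₃ * 𝔅₃ * ρ).trace
      + (S * S * ρ).trace = 12 := by
    have : ((𝔅₁ * 𝔅₁ + 𝔅₂ * 𝔅₂ + 𝔅₃ * 𝔅₃ + S * S) * ρ).trace = 12 := by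
      rw [hid, hB₁sq, hB₂sq, hB₃sq]
      simp only [Matrix.add_mul, Matrix.one_mul, Matrix.trace_add, hρtr]
      norm_num
    simpa only [Matrix.add_mul, Matrix.trace_add] using this
  have hsum : a + b + c = 12 - s := by
    have := congrArg Complex.re htr
    simp only [Complex.add_re] at this
    rw [← haDef, ← hbDef, ← hcDef, ← hsDef] at this
    norm_num at this
    linarith
  have part1 : n 𝔅₁ + n 𝔅₂ + n 𝔅₃ ≤ Real.sqrt (3 * (12 - s)) := by
    rw [hna, hnb, hnc, ← hsum]
    exact sqrt3_sum_le ha hb hc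
  have part2 : Real.sqrt (3 * (12 - s)) ≤ 6 := by
    have h36 : 3 * (12 - s) ≤ 36 := by linarith
    calc Real.sqrt (3 * (12 - s)) ≤ Real.sqrt 36 := Real.sqrt_le_sqrt h36
      _ = 6 := by rw [show (36:ℝ) = 6^2 by norm_num, Real.sqrt_sq (by norm_num)]
  refine ⟨part1, part2, by linarith [part1.trans part2], ?_⟩
  intro h0
  have hb3 : B₁ + B₂ = -B₃ := by rwa [eq_neg_iff_add_eq_zero]
  have hb2 : B₁ + B₃ = -B₂ := by
    rw [eq_neg_iff_add_eq_zero]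
    rw [← h0, hS]; abel
  have hb1 : B₂ + B₃ = -B₁ := by
    rw [eq_neg_iff_add_eq_zero]
    rw [← h0, hS]; abel
  have e1 : 𝔅₁ = -(B₃ + B₃) := by
    show B₁ + B₂ - B₃ = _
    rw [hb3]; abel
  have e2 : 𝔅₂ = -(B₂ + B₂) := by
    show B₁ - B₂ + B₃ = _
    rw [show B₁ - B₂ + B₃ = (B₁ + B₃) - B₂ by abel, hb2]; abel
  have e3 : 𝔅₃ = -(B₁ + B₁) := by
    show -B₁ + B₂ + B₃ = _
    rw [show -B₁ + B₂ + B₃ = (B₂ + B₃) - B₁ by abel, hb1]; abel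
  have hn1 : n 𝔅₁ = 2 := by rw [hna, haDef, e1]; exact norm_neg_double B₃ ρ hB₃sq hρtr
  have hn2 : n 𝔅₂ = 2 := by rw [hnb, hbDef, e2]; exact norm_neg_double B₂ ρ hB₂sq hρtr
  have hn3 : n 𝔅₃ = 2 := by rw [hnc, hcDef, e3]; exact norm_neg_double B₁ ρ hB₁sq hρtr
  exact ⟨⟨hn1, hn2, hn3⟩, by rw [hn1, hn2, hn3]; norm_num⟩
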